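/- Let G = ⟨a, t | [a,t,t] = 1, [a,t,a,a,a] = 1⟩ and let w = [a,t,a,a,t,a]. Then for every element c of the commutator subgroup [G,G] and every integer n ≥ 2, the element [a,t,a,a,t,c] lies in the subgroup [⟨w⟩^G, G]·γ_n(G), where ⟨w⟩^G is the normal closure of w in G. -/

import Mathlib

open scoped commutatorElement

/-- The left-normed iterated commutator `[x, y₁, …, yₖ]`. -/
def leftComm {G : Type*} [Group G] (x : G) (l : List G) : G :=
  l.foldl (fun p q => ⁅p, q⁆) x

/-- The relator `[a,t,t]`, where `a, t` are the generators of the free group on `Fin 2`. -/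
def relATT : FreeGroup (Fin 2) :=
  leftComm (FreeGroup.of 0) [FreeGroup.of 1, FreeGroup.of 1]

/-- The relator `[a,t,a,a,a]`. -/
def relATAAA : FreeGroup (Fin 2) :=
  leftComm (FreeGroup.of 0) [FreeGroup.of 1, FreeGroup.of 0, FreeGroup.of 0, FreeGroup.of 0]

/-- The group `G = ⟨a, t | [a,t,t] = 1, [a,t,a,a,a] = 1⟩`. -/
abbrev DGroup : Type := PresentedGroup ({relATT, relATAAA} : Set (FreeGroup (Fin 2)))

/-- The generator `a` of `DGroup`. -/
def aD : DGroup := PresentedGroup.of 0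

/-- The generator `t` of `DGroup`. -/
def tD : DGroup := PresentedGroup.of 1

/-- The element `w = [a,t,a,a,t,a]` of `DGroup`. -/
def wD : DGroup := leftComm aD [tD, aD, aD, tD, aD]

namespace Lemma7Aux


variable {G : Type*} [Group G]

/-- An element commuting with everything. -/
def IsCentral (z : G) : Prop := ∀ x : G, Commute z x

namespace IsCentral

theorem inv {z : G} (h : IsCentral z) : IsCentral z⁻¹ := fun x => (h x).inv_left

theorem mul {z w : G} (hz : IsCentral z) (hw : IsCentral w) : IsCentral (z * w) :=
  fun x => (hz x).mul_left (hw x)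

theorem zpow {z : G} (h : IsCentral z) (k : ℤ) : IsCentral (z ^ k) :=
  fun x => (h x).zpow_left k

theorem conj_eq {z : G} (h : IsCentral z) (g : G) : g⁻¹ * z * g = z := by
  rw [mul_assoc, (h g).eq]; group

theorem conj_eq' {z : G} (h : IsCentral z) (g : G) : g * z * g⁻¹ = z := by
  rw [mul_assoc, (h g⁻¹).eq]; group

theorem comm_one_left {z : G} (h : IsCentral z) (x : G) : ⁅z, x⁆ = 1 :=
  commutatorElement_eq_one_iff_commute.mpr (h x)

end IsCentral

theorem hallWitt (x y z : G) :
    ⁅⁅x,y⁆, y*z*y⁻¹⁆ * ⁅⁅y,z⁆, z*x*z⁻¹⁆ * ⁅⁅z,x⁆, x*y*x⁻¹⁆ = 1 := by group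

/-- The core computation: in a group generated by `a, t` with relations `[a,t,t]=1`,
`[a,t,a,a,a]=1`, where `w=[a,t,a,a,t,a]` is central and `[u,b]`, `[u,c₂]` are central,
the element `u = [a,t,a,a,t]` commutes with `t`. -/
theorem key (a t b c1 c2 u w zb zc e : G)
    (hb : b = ⁅a, t⁆) (hc1 : c1 = ⁅b, a⁆) (hc2 : c2 = ⁅c1, a⁆)
    (hu : u = ⁅c2, t⁆) (hw : w = ⁅u, a⁆) (hzb : zb = ⁅u, b⁆) (hzc : zc = ⁅u, c2⁆)
    (he : e = ⁅c1, b⁆)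
    (h1 : ⁅b, t⁆ = 1) (h2 : ⁅c2, a⁆ = 1)
    (cw : IsCentral w) (czb : IsCentral zb) (czc : IsCentral zc) :
    ⁅u, t⁆ = 1 := by
  have cbt : Commute b t := commutatorElement_eq_one_iff_commute.mp h1
  have cc2a : Commute c2 a := commutatorElement_eq_one_iff_commute.mp h2
  have E1 : a * t * a⁻¹ = b * t := by rw [hb]; group
  have E2 : t * a * t⁻¹ = b⁻¹ * a := by rw [hb]; group
  have E5 : t * b * t⁻¹ = b := by rw [cbt.symm.eq]; group
  have Ec2 : a * c2 * a⁻¹ = c2 := by rw [cc2a.symm.eq]; group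
  have E6 : t * c1 * t⁻¹ = b⁻¹ * c1 * b := by
    have h' : t * c1 * t⁻¹ = ⁅t*b*t⁻¹, t*a*t⁻¹⁆ := by rw [hc1]; group
    rw [h', E5, E2, hc1]; group
  have E7 : t * c2 * t⁻¹ = u⁻¹ * c2 := by rw [hu]; group
  have E8 : a * u * a⁻¹ = u * w⁻¹ := by
    have h' : a * u * a⁻¹ = u * (u⁻¹ * w⁻¹ * u) := by rw [hw]; group
    rw [h', cw.inv.conj_eq u]
  have E9 : b * u * b⁻¹ = u * zb⁻¹ := by
    have h' : b * u * b⁻¹ = u * (u⁻¹ * zb⁻¹ * u) := by rw [hzb]; group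
    rw [h', czb.inv.conj_eq u]
  have E11 : a * u * a⁻¹ = ⁅c2, b*t⁆ := by
    have h' : a * u * a⁻¹ = ⁅a*c2*a⁻¹, a*t*a⁻¹⁆ := by rw [hu]; group
    rw [h', Ec2, E1]
  have E12 : ⁅c2, b*t⁆ = ⁅c2,b⁆ * (b * u * b⁻¹) := by rw [hu]; group
  have e13a : u * w⁻¹ = ⁅c2,b⁆ * (u * zb⁻¹) := by rw [← E8, E11, E12, E9]
  have E13 : ⁅c2, b⁆ = w⁻¹ * zb := by
    have h' : ⁅c2,b⁆ = (u * w⁻¹) * (u * zb⁻¹)⁻¹ := by rw [e13a]; group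
    have h'' : (u * w⁻¹) * (u * zb⁻¹)⁻¹ = u * (w⁻¹ * zb) * u⁻¹ := by group
    rw [h', h'', (cw.inv.mul czb).conj_eq' u]
  -- Hall–Witt step: zb = 1
  have hzb1 : zb = 1 := by
    have hwitt := hallWitt c2 t b
    rw [E5] at hwitt
    have htb : ⁅t, b⁆ = 1 := commutatorElement_eq_one_iff_commute.mpr cbt.symm
    rw [htb] at hwitt
    have hbc2 : ⁅b, c2⁆ = zb⁻¹ * w := by
      have h' : ⁅b,c2⁆ = ⁅c2,b⁆⁻¹ := by group
      rw [h', E13]; group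
    rw [hbc2, (czb.inv.mul cw).comm_one_left (c2*t*c2⁻¹), ← hu, ← hzb] at hwitt
    simpa using hwitt
  have cub : Commute u b := by
    apply commutatorElement_eq_one_iff_commute.mp
    rw [← hzb, hzb1]
  have cub_eq : b * u * b⁻¹ = u := by rw [cub.symm.eq]; group
  have cub_eq' : b⁻¹ * u * b = u := by rw [mul_assoc, cub.eq]; group
  have E13' : ⁅c2, b⁆ = w⁻¹ := by rw [E13, hzb1, mul_one]
  have E15 : b⁻¹ * c2 * b = w⁻¹ * c2 := by
    have h' : b⁻¹ * c2 * b = (b⁻¹ * ⁅c2,b⁆ * b) * c2 := by group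
    rw [h', E13', cw.inv.conj_eq b]
  have Ezc : c2⁻¹ * u * c2 = zc * u := by
    have h' : c2⁻¹ * u * c2 = (c2⁻¹ * ⁅u,c2⁆ * c2) * u := by group
    rw [h', ← hzc, czc.conj_eq c2]
  have Ezc' : c2⁻¹ * u⁻¹ * c2 = u⁻¹ * zc⁻¹ := by
    have h' : c2⁻¹ * u⁻¹ * c2 = (c2⁻¹ * u * c2)⁻¹ := by group
    rw [h', Ezc]; group
  have E16a : u⁻¹ * c2 = b⁻¹ * c1 * (a * b⁻¹ * c1⁻¹ * b * a⁻¹) * b := by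
    have h' : u⁻¹ * c2 = ⁅t*c1*t⁻¹, t*a*t⁻¹⁆ := by rw [← E7, hc2]; group
    rw [h', E6, E2]; group
  have bridge : b⁻¹ * c1 * (a * b⁻¹ * c1⁻¹ * b * a⁻¹) * b
      = (b⁻¹*c2*b) * (b⁻¹*a*b⁻¹*e⁻¹*b*a⁻¹*b) := by rw [hc2, he]; group
  have F5a : u⁻¹ * c2 = (b⁻¹*c2*b) * (b⁻¹*a*b⁻¹*e⁻¹*b*a⁻¹*b) := E16a.trans bridge
  have K1 : b⁻¹*a*b⁻¹*e⁻¹*b*a⁻¹*b = (b⁻¹*c2*b)⁻¹ * (u⁻¹*c2) := by rw [F5a]; group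
  rw [E15] at K1
  have K2 : (w⁻¹*c2)⁻¹ * (u⁻¹*c2) = (c2⁻¹*w*c2) * (c2⁻¹*u⁻¹*c2) := by group
  rw [cw.conj_eq c2, Ezc'] at K2
  have Kfin : b⁻¹*a*b⁻¹*e⁻¹*b*a⁻¹*b = w * (u⁻¹ * zc⁻¹) := K1.trans K2
  have F5d : b⁻¹*a*b⁻¹*e*b*a⁻¹*b = zc * u * w⁻¹ := by
    have h' : b⁻¹*a*b⁻¹*e*b*a⁻¹*b = (b⁻¹*a*b⁻¹*e⁻¹*b*a⁻¹*b)⁻¹ := by group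
    rw [h', Kfin]; group
  have Ea' : a⁻¹ * u * a = u * w := by
    have h1' : a⁻¹*(a*u*a⁻¹)*a = u := by group
    rw [E8] at h1'
    have h2' : a⁻¹*u*a = (a⁻¹*(u*w⁻¹)*a)*(a⁻¹*w*a) := by group
    rw [h1', cw.conj_eq a] at h2'
    exact h2'
  have F4 : b*a⁻¹*b*u*b⁻¹*a*b⁻¹ = u * w := by
    have h' : b*a⁻¹*b*u*b⁻¹*a*b⁻¹ = b*(a⁻¹*(b*u*b⁻¹)*a)*b⁻¹ := by group
    rw [h', cub_eq, Ea']
    have h'' : b*(u*w)*b⁻¹ = (b*u*b⁻¹)*(b*w*b⁻¹) := by group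
    rw [h'', cub_eq, cw.conj_eq' b]
  have F6 : e = zc * u := by
    have h' : e = (b*a⁻¹*b)*(b⁻¹*a*b⁻¹*e*b*a⁻¹*b)*(b⁻¹*a*b⁻¹) := by group
    rw [F5d] at h'
    have h'' : (b*a⁻¹*b)*(zc*u*w⁻¹)*(b⁻¹*a*b⁻¹)
        = ((b*a⁻¹*b)*zc*(b*a⁻¹*b)⁻¹) * ((b*a⁻¹*b)*u*(b*a⁻¹*b)⁻¹) * ((b*a⁻¹*b)*w⁻¹*(b*a⁻¹*b)⁻¹) := by
      group
    rw [czc.conj_eq' (b*a⁻¹*b), cw.inv.conj_eq' (b*a⁻¹*b)] at h''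
    have h''' : (b*a⁻¹*b)*u*(b*a⁻¹*b)⁻¹ = b*a⁻¹*b*u*b⁻¹*a*b⁻¹ := by group
    rw [h''', F4] at h''
    rw [h', h'']; group
  have hu' : u = zc⁻¹ * e := by rw [F6]; group
  have E17a : t*e*t⁻¹ = b⁻¹*e*b := by
    have h' : t*e*t⁻¹ = (t*c1*t⁻¹)*(t*b*t⁻¹)*(t*c1*t⁻¹)⁻¹*(t*b*t⁻¹)⁻¹ := by rw [he]; group
    rw [h', E5, E6, he]; group
  have E17b : b⁻¹*e*b = e := by
    rw [F6]
    have h' : b⁻¹*(zc*u)*b = (b⁻¹*zc*b)*(b⁻¹*u*b) := by group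
    rw [h', czc.conj_eq b, cub_eq']
  have E17 : t*u*t⁻¹ = u := by
    have h' : t*u*t⁻¹ = (t*zc⁻¹*t⁻¹)*(t*e*t⁻¹) := by rw [hu']; group
    rw [czc.inv.conj_eq' t, E17a, E17b, ← hu'] at h'
    exact h'
  apply commutatorElement_eq_one_iff_commute.mpr
  show u * t = t * u
  calc u * t = (t*u*t⁻¹) * t := by rw [E17]
    _ = t * u := by group



/-- χ-argument: if `[u,a]` is central and `u` commutes with `t`, and `G` is generated by
`a` and `t`, then `u` commutes with every commutator. -/
theorem chi (a t u : G) (hw : IsCentral ⁅u, a⁆) (hut : Commute u t)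
    (hgen : ∀ x : G, x ∈ Subgroup.closure ({a, t} : Set G)) :
    ∀ g h : G, Commute u ⁅g, h⁆ := by
  set w := ⁅u, a⁆ with hwdef
  have main : ∀ g : G, ∃ k : ℤ, g⁻¹ * u * g = u * w ^ k := by
    intro g
    induction hgen g using Subgroup.closure_induction with
    | mem x hx =>
      rcases hx with hx | hx
      · subst hx
        refine ⟨1, ?_⟩
        have h' : x⁻¹ * u * x = u * ((u*x)⁻¹ * w * (u*x)) := by rw [hwdef]; group
        rw [h', hw.conj_eq (u*x), zpow_one]
      · simp only [Set.mem_singleton_iff] at hx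
        subst hx
        refine ⟨0, ?_⟩
        have h' : x⁻¹ * u * x = x⁻¹ * (u * x) := by group
        rw [h', hut.eq]
        group
    | one => exact ⟨0, by group⟩
    | mul x y hx hy ihx ihy =>
      obtain ⟨k1, h1⟩ := ihx
      obtain ⟨k2, h2⟩ := ihy
      refine ⟨k1 + k2, ?_⟩
      have h' : (x*y)⁻¹ * u * (x*y) = y⁻¹ * (x⁻¹ * u * x) * y := by group
      rw [h', h1]
      have h'' : y⁻¹ * (u * w ^ k1) * y = (y⁻¹ * u * y) * (y⁻¹ * w ^ k1 * y) := by group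
      rw [h'', h2, (hw.zpow k1).conj_eq y]
      group
    | inv x hx ihx =>
      obtain ⟨k, hk⟩ := ihx
      refine ⟨-k, ?_⟩
      have h1 : x * (x⁻¹ * u * x) * x⁻¹ = u := by group
      rw [hk] at h1
      have h2 : x⁻¹⁻¹ * u * x⁻¹ = (x*(u*w^k)*x⁻¹) * (x * w^(-k) * x⁻¹) := by group
      rw [h1, (hw.zpow (-k)).conj_eq' x] at h2
      exact h2
  intro g h
  obtain ⟨k1, hg⟩ := main g
  obtain ⟨k2, hh⟩ := main h
  have hg' : g * u * g⁻¹ = u * w ^ (-k1) := by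
    have h1 : g * (g⁻¹ * u * g) * g⁻¹ = u := by group
    rw [hg] at h1
    have h2 : g * u * g⁻¹ = (g*(u*w^k1)*g⁻¹) * (g * w^(-k1) * g⁻¹) := by group
    rw [h1, (hw.zpow (-k1)).conj_eq' g] at h2
    exact h2
  have hh' : h * u * h⁻¹ = u * w ^ (-k2) := by
    have h1 : h * (h⁻¹ * u * h) * h⁻¹ = u := by group
    rw [hh] at h1
    have h2 : h * u * h⁻¹ = (h*(u*w^k2)*h⁻¹) * (h * w^(-k2) * h⁻¹) := by group
    rw [h1, (hw.zpow (-k2)).conj_eq' h] at h2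
    exact h2
  have s1 : h⁻¹ * (g⁻¹ * u * g) * h = u * w ^ (k1 + k2) := by
    rw [hg]
    have h' : h⁻¹ * (u * w^k1) * h = (h⁻¹*u*h) * (h⁻¹ * w^k1 * h) := by group
    rw [h', hh, (hw.zpow k1).conj_eq h]
    group
  have s2 : g * (h⁻¹ * (g⁻¹ * u * g) * h) * g⁻¹ = u * w ^ k2 := by
    rw [s1]
    have h' : g * (u * w^(k1+k2)) * g⁻¹ = (g*u*g⁻¹) * (g * w^(k1+k2) * g⁻¹) := by group
    rw [h', hg', (hw.zpow (k1+k2)).conj_eq' g]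
    group
  have s3 : h * (g * (h⁻¹ * (g⁻¹ * u * g) * h) * g⁻¹) * h⁻¹ = u := by
    rw [s2]
    have h' : h * (u * w^k2) * h⁻¹ = (h*u*h⁻¹) * (h * w^k2 * h⁻¹) := by group
    rw [h', hh', (hw.zpow k2).conj_eq' h]
    group
  have big : ⁅g,h⁆⁻¹ * u * ⁅g,h⁆ = h * (g * (h⁻¹ * (g⁻¹ * u * g) * h) * g⁻¹) * h⁻¹ := by
    group
  rw [s3] at big
  show u * ⁅g,h⁆ = ⁅g,h⁆ * u
  calc u * ⁅g,h⁆ = ⁅g,h⁆ * (⁅g,h⁆⁻¹ * u * ⁅g,h⁆) := by group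
    _ = ⁅g,h⁆ * u := by rw [big]



abbrev relsD : Set (FreeGroup (Fin 2)) := {relATT, relATAAA}

abbrev ND : Subgroup DGroup := Subgroup.normalClosure {wD}

def MM (C : ℕ) : Subgroup DGroup :=
  ⁅ND, (⊤ : Subgroup DGroup)⁆ ⊔ (⊤ : Subgroup DGroup).lowerCentralSeries C

instance MMnormal (C : ℕ) : (MM C).Normal := Subgroup.sup_normal _ _

-- unfolding of relators through the quotient map
lemma relATT_eq : relATT = ⁅⁅FreeGroup.of (0 : Fin 2), FreeGroup.of (1 : Fin 2)⁆, FreeGroup.of (1 : Fin 2)⁆ := rfl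

lemma relATAAA_eq :
    relATAAA = ⁅⁅⁅⁅FreeGroup.of (0 : Fin 2), FreeGroup.of (1 : Fin 2)⁆, FreeGroup.of (0 : Fin 2)⁆,
      FreeGroup.of (0 : Fin 2)⁆, FreeGroup.of (0 : Fin 2)⁆ := rfl

lemma mk_rel_one {r : FreeGroup (Fin 2)} (hr : r ∈ relsD) :
    PresentedGroup.mk relsD r = 1 := by
  have : r ∈ Subgroup.normalClosure relsD := Subgroup.subset_normalClosure hr
  exact (QuotientGroup.eq_one_iff r).mpr this

lemma rel1D : ⁅⁅aD, tD⁆, tD⁆ = (1 : DGroup) := by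
  have h := mk_rel_one (show relATT ∈ relsD from Set.mem_insert _ _)
  rw [relATT_eq, map_commutatorElement, map_commutatorElement] at h
  exact h

lemma rel2D : ⁅⁅⁅⁅aD, tD⁆, aD⁆, aD⁆, aD⁆ = (1 : DGroup) := by
  have h := mk_rel_one (show relATAAA ∈ relsD from Set.mem_insert_of_mem _ rfl)
  rw [relATAAA_eq, map_commutatorElement, map_commutatorElement, map_commutatorElement,
    map_commutatorElement] at h
  exact h

lemma wD_eq : wD = ⁅⁅⁅⁅⁅aD, tD⁆, aD⁆, aD⁆, tD⁆, aD⁆ := rfl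

lemma wD_mem : wD ∈ ND := Subgroup.subset_normalClosure rfl

lemma genD : ∀ x : DGroup, x ∈ Subgroup.closure ({aD, tD} : Set DGroup) := by
  intro x
  apply PresentedGroup.generated_by
  intro j
  fin_cases j
  · exact Subgroup.subset_closure (Set.mem_insert _ _)
  · exact Subgroup.subset_closure (Set.mem_insert_of_mem _ rfl)

lemma bD_mem_commutator : ⁅aD, tD⁆ ∈ commutator DGroup :=
  Subgroup.commutator_mem_commutator (Subgroup.mem_top _) (Subgroup.mem_top _)

lemma c2D_mem_commutator : ⁅⁅⁅aD, tD⁆, aD⁆, aD⁆ ∈ commutator DGroup :=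
  Subgroup.commutator_mem_commutator (Subgroup.mem_top _) (Subgroup.mem_top _)

lemma NDcomm_le : ⁅ND, (⊤ : Subgroup DGroup)⁆ ≤ ND :=
  Subgroup.commutator_le_left _ _


open Lemma7Aux Pointwise

/-- The main induction: for every `C`, and every `c` in the commutator subgroup,
`[u, c] ∈ [N,G]·γ_{C+1}(G)` where `u = [a,t,a,a,t]`. -/
theorem mainInd : ∀ C : ℕ, ∀ c ∈ commutator DGroup,
    (⁅⁅⁅⁅⁅aD, tD⁆, aD⁆, aD⁆, tD⁆, c⁆ : DGroup) ∈ MM C := by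
  intro C
  induction C with
  | zero =>
    intro c _
    exact Subgroup.mem_sup_right (Subgroup.mem_top _)
  | succ C ih =>
    intro c hc
    set uD : DGroup := ⁅⁅⁅⁅aD, tD⁆, aD⁆, aD⁆, tD⁆ with huD
    -- the quotient by `MM (C+1)`
    let π : DGroup →* DGroup ⧸ MM (C + 1) := QuotientGroup.mk' (MM (C + 1))
    have hker : ∀ x : DGroup, x ∈ MM (C + 1) → π x = 1 := fun x hx =>
      (QuotientGroup.eq_one_iff x).mpr hx
    have hker' : ∀ x : DGroup, π x = 1 → x ∈ MM (C + 1) := fun x hx =>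
      (QuotientGroup.eq_one_iff x).mp hx
    have hπsurj := QuotientGroup.mk'_surjective (MM (C + 1))
    -- commutators of `MM C` with anything land in `MM (C+1)`
    have hMMstep : ∀ x ∈ MM C, ∀ g : DGroup, ⁅x, g⁆ ∈ MM (C + 1) := by
      intro x hx g
      have hx' : x ∈ (↑(⁅ND, (⊤ : Subgroup DGroup)⁆) : Set DGroup) *
          (↑((⊤ : Subgroup DGroup).lowerCentralSeries C) : Set DGroup) := by
        rw [← Subgroup.mul_normal]; exact hx
      obtain ⟨h, hh, k, hk, rfl⟩ := hx'
      have hcomm : ⁅h * k, g⁆ = (h * ⁅k, g⁆ * h⁻¹) * ⁅h, g⁆ := by group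
      rw [hcomm]
      apply Subgroup.mul_mem
      · have hk' : ⁅k, g⁆ ∈ (⊤ : Subgroup DGroup).lowerCentralSeries (C + 1) := by
          show ⁅k, g⁆ ∈ ⁅(⊤ : Subgroup DGroup).lowerCentralSeries C, (⊤ : Subgroup DGroup)⁆
          exact Subgroup.commutator_mem_commutator hk (Subgroup.mem_top g)
        exact Subgroup.mem_sup_right
          ((Subgroup.lowerCentralSeries_normal (⊤ : Subgroup DGroup) (C + 1)).conj_mem _ hk' h)
      · exact Subgroup.mem_sup_left
          (Subgroup.commutator_mem_commutator (NDcomm_le hh) (Subgroup.mem_top g))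
    -- elements of `MM C` become central in the quotient
    have hcentral : ∀ x ∈ MM C, IsCentral (π x) := by
      intro x hx q
      obtain ⟨g, rfl⟩ := hπsurj q
      have h1 : ⁅π x, π g⁆ = 1 := by
        rw [← map_commutatorElement]; exact hker _ (hMMstep x hx g)
      exact commutatorElement_eq_one_iff_commute.mp h1
    -- relations in the quotient
    have rel1Q : ⁅⁅π aD, π tD⁆, π tD⁆ = 1 := by
      rw [← map_commutatorElement, ← map_commutatorElement, rel1D, map_one]
    have rel2Q : ⁅⁅⁅⁅π aD, π tD⁆, π aD⁆, π aD⁆, π aD⁆ = 1 := by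
      rw [← map_commutatorElement, ← map_commutatorElement, ← map_commutatorElement,
        ← map_commutatorElement, rel2D, map_one]
    -- `w` is central in the quotient
    have hwQ : IsCentral ⁅⁅⁅⁅⁅π aD, π tD⁆, π aD⁆, π aD⁆, π tD⁆, π aD⁆ := by
      intro q
      obtain ⟨g, rfl⟩ := hπsurj q
      have h1 : ⁅wD, g⁆ ∈ MM (C + 1) :=
        Subgroup.mem_sup_left (Subgroup.commutator_mem_commutator wD_mem (Subgroup.mem_top g))
      have h2 : ⁅π wD, π g⁆ = 1 := by rw [← map_commutatorElement]; exact hker _ h1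
      have h3 : π wD = ⁅⁅⁅⁅⁅π aD, π tD⁆, π aD⁆, π aD⁆, π tD⁆, π aD⁆ := by
        rw [wD_eq]
        simp only [map_commutatorElement]
      rw [h3] at h2
      exact commutatorElement_eq_one_iff_commute.mp h2
    -- `[u,b]` and `[u,c2]` are central in the quotient (from the induction hypothesis)
    have hπu : π uD = ⁅⁅⁅⁅π aD, π tD⁆, π aD⁆, π aD⁆, π tD⁆ := by
      rw [huD]; simp only [map_commutatorElement]
    have hzbQ : IsCentral ⁅⁅⁅⁅⁅π aD, π tD⁆, π aD⁆, π aD⁆, π tD⁆, ⁅π aD, π tD⁆⁆ := by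
      have h1 := hcentral _ (ih ⁅aD, tD⁆ bD_mem_commutator)
      have h2 : π ⁅uD, ⁅aD, tD⁆⁆
          = ⁅⁅⁅⁅⁅π aD, π tD⁆, π aD⁆, π aD⁆, π tD⁆, ⁅π aD, π tD⁆⁆ := by
        rw [huD]; simp only [map_commutatorElement]
      rwa [h2] at h1
    have hzcQ : IsCentral ⁅⁅⁅⁅⁅π aD, π tD⁆, π aD⁆, π aD⁆, π tD⁆, ⁅⁅⁅π aD, π tD⁆, π aD⁆, π aD⁆⁆ := by
      have h1 := hcentral _ (ih ⁅⁅⁅aD, tD⁆, aD⁆, aD⁆ c2D_mem_commutator)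
      have h2 : π ⁅uD, ⁅⁅⁅aD, tD⁆, aD⁆, aD⁆⁆
          = ⁅⁅⁅⁅⁅π aD, π tD⁆, π aD⁆, π aD⁆, π tD⁆, ⁅⁅⁅π aD, π tD⁆, π aD⁆, π aD⁆⁆ := by
        rw [huD]; simp only [map_commutatorElement]
      rwa [h2] at h1
    -- the key computation: `[u, t] = 1` in the quotient
    have hkey : ⁅⁅⁅⁅⁅π aD, π tD⁆, π aD⁆, π aD⁆, π tD⁆, π tD⁆ = 1 :=
      key (π aD) (π tD) ⁅π aD, π tD⁆ ⁅⁅π aD, π tD⁆, π aD⁆ ⁅⁅⁅π aD, π tD⁆, π aD⁆, π aD⁆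
        ⁅⁅⁅⁅π aD, π tD⁆, π aD⁆, π aD⁆, π tD⁆ ⁅⁅⁅⁅⁅π aD, π tD⁆, π aD⁆, π aD⁆, π tD⁆, π aD⁆
        ⁅⁅⁅⁅⁅π aD, π tD⁆, π aD⁆, π aD⁆, π tD⁆, ⁅π aD, π tD⁆⁆
        ⁅⁅⁅⁅⁅π aD, π tD⁆, π aD⁆, π aD⁆, π tD⁆, ⁅⁅⁅π aD, π tD⁆, π aD⁆, π aD⁆⁆
        ⁅⁅⁅π aD, π tD⁆, π aD⁆, ⁅π aD, π tD⁆⁆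
        rfl rfl rfl rfl rfl rfl rfl rfl rel1Q rel2Q hwQ hzbQ hzcQ
    -- generation of the quotient
    have hgenQ : ∀ x : DGroup ⧸ MM (C + 1),
        x ∈ Subgroup.closure ({π aD, π tD} : Set (DGroup ⧸ MM (C + 1))) := by
      intro x
      obtain ⟨g, rfl⟩ := hπsurj x
      induction genD g using Subgroup.closure_induction with
      | mem y hy =>
        rcases hy with hy | hy
        · subst hy; exact Subgroup.subset_closure (Set.mem_insert _ _)
        · simp only [Set.mem_singleton_iff] at hy
          subst hy; exact Subgroup.subset_closure (Set.mem_insert_of_mem _ rfl)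
      | one => rw [map_one]; exact Subgroup.one_mem _
      | mul x y hx hy ihx ihy => rw [map_mul]; exact Subgroup.mul_mem _ ihx ihy
      | inv x hx ihx => rw [map_inv]; exact Subgroup.inv_mem _ ihx
    -- the χ-argument
    have hut : Commute (π uD) (π tD) := by
      apply commutatorElement_eq_one_iff_commute.mp
      rw [hπu]; exact hkey
    have hwQ' : IsCentral ⁅π uD, π aD⁆ := by rw [hπu]; exact hwQ
    have hchi := chi (π aD) (π tD) (π uD) hwQ' hut hgenQ
    -- conclude for `c`
    have hcomap : commutator DGroup ≤
        Subgroup.comap π (Subgroup.centralizer {π uD}) := by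
      rw [commutator_def]
      apply Subgroup.commutator_le.mpr
      intro g _ h _
      simp only [Subgroup.mem_comap, map_commutatorElement]
      intro y hy
      rw [Set.mem_singleton_iff] at hy
      subst hy
      exact (hchi (π g) (π h)).eq
    have hcc : Commute (π uD) (π c) := by
      have h1 := hcomap hc
      simp only [Subgroup.mem_comap] at h1
      have h2 := Subgroup.mem_centralizer_iff.mp h1 (π uD) rfl
      exact h2
    apply hker'
    rw [map_commutatorElement, hπu]
    apply commutatorElement_eq_one_iff_commute.mpr
    rw [← hπu]
    exact hcc

end Lemma7Aux

/-- Lemma 7: for every `c ∈ [G,G]` and every `n ≥ 2`, the element `[a,t,a,a,t,c]` lies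
in `[⟨w⟩^G, G]·γ_n(G)`.  (Here `γ_n(G) = lowerCentralSeries G (n-1)`.) -/
theorem lemma7 (c : DGroup) (hc : c ∈ commutator DGroup) (n : ℕ) (hn : 2 ≤ n) :
    leftComm aD [tD, aD, aD, tD, c] ∈
      ⁅Subgroup.normalClosure {wD}, (⊤ : Subgroup DGroup)⁆ ⊔
        (⊤ : Subgroup DGroup).lowerCentralSeries (n - 1) := by
  have h := Lemma7Aux.mainInd (n - 1) c hc
  exact h
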